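/- Let M ∈ ℝ, c ∈ ℝ with c ≠ 0, and let H be the map H(x,y) = (x̄, ȳ) with x̄ = M + c·x − y², ȳ = (y + x̄² − M)/c. Then H has a fixed point (x₀, x₀) on the diagonal at which the Jacobian matrix of H has eigenvalue −1 if and only if 4M = 4 − (c − 1)² or 4M = (c + 1)(3c − 1). (These are the period-doubling curves PD₁: M = 1 − (c−1)²/4 and PD₂: M = (c+1)(3c−1)/4 of the family H.) -/
import Mathlib


/-- The map `H(x,y) = (x̄, ȳ)` with `x̄ = M + c·x − y²` and `ȳ = (y + x̄² − M)/c`,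
the explicit form of the implicit system `x̄ = M + c·x − y²`, `c·ȳ = −M + y + x̄²`. -/
noncomputable def Hmap (M c : ℝ) (p : ℝ × ℝ) : ℝ × ℝ :=
  (M + c * p.1 - p.2 ^ 2,
    (p.2 + (M + c * p.1 - p.2 ^ 2) ^ 2 - M) / c)

/-- The Jacobian matrix (2×2 real derivative matrix) of `Hmap M c` at the point
`(x,y)`, where `x̄ = M + c·x − y²`:
`[[c, −2y], [2x̄, (1 − 4x̄y)/c]]`. -/
noncomputable def HJac (M c : ℝ) (p : ℝ × ℝ) : Matrix (Fin 2) (Fin 2) ℝ :=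
  !![c, -2 * p.2;
     2 * (M + c * p.1 - p.2 ^ 2), (1 - 4 * (M + c * p.1 - p.2 ^ 2) * p.2) / c]

/-- `μ ∈ ℂ` is an eigenvalue of the real 2×2 matrix `A`
(eigenvalues of real matrices are taken over `ℂ`). -/
def hasEigenvalue (A : Matrix (Fin 2) (Fin 2) ℝ) (μ : ℂ) : Prop :=
  (A.map (fun t : ℝ => (t : ℂ)) - μ • 1).det = 0

lemma eig_iff (a b d e : ℝ) :
    hasEigenvalue !![a, b; d, e] (-1) ↔ (a + 1) * (e + 1) - b * d = 0 := by
  unfold hasEigenvalue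
  rw [Matrix.det_fin_two]
  simp [Matrix.map_apply, Matrix.one_apply]
  constructor
  · intro h
    have : ((((a+1)*(e+1) - b*d : ℝ)) : ℂ) = 0 := by push_cast; ring_nf; ring_nf at h; linear_combination h
    exact_mod_cast this
  · intro h
    have : ((((a+1)*(e+1) - b*d : ℝ)) : ℂ) = 0 := by exact_mod_cast h
    push_cast at this; linear_combination this

/-- `H` has a diagonal fixed point at which the Jacobian matrix has
eigenvalue `−1` iff `4M = 4 − (c−1)²` (period-doubling curve `PD₁`) or
`4M = (c+1)(3c−1)` (period-doubling curve `PD₂`). -/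
theorem stmt_13 (M c : ℝ) (hc : c ≠ 0) :
    (∃ x₀ : ℝ, Hmap M c (x₀, x₀) = (x₀, x₀) ∧
        hasEigenvalue (HJac M c (x₀, x₀)) (-1)) ↔
      (4 * M = 4 - (c - 1) ^ 2 ∨ 4 * M = (c + 1) * (3 * c - 1)) := by
  constructor
  · rintro ⟨x, hfix, heig⟩
    rw [Hmap, Prod.mk.injEq] at hfix
    obtain ⟨h1, -⟩ := hfix
    simp only at h1
    rw [HJac, eig_iff] at heig
    simp only at heig
    rw [h1] at heig
    have h2 : ((c + 1) * ((1 - 4 * x * x) / c + 1) - -2 * x * (2 * x)) * c = 0 := by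
      rw [heig]; ring
    have key : (c + 1) ^ 2 = 4 * x ^ 2 := by
      field_simp at h2
      linear_combination h2
    have hM : 4 * M = 4 * x ^ 2 + 4 * (1 - c) * x := by linarith [h1]
    have prod0 : (4 * M - (4 - (c - 1) ^ 2)) * (4 * M - (c + 1) * (3 * c - 1)) = 0 := by
      linear_combination (4*M + (4*x^2 + 4*(1-c)*x) - (4 - (c-1)^2) - (c+1)*(3*c-1)) * hM
        + (-(2*x-c+3)*(2*x-3*c+1)) * key
    rcases mul_eq_zero.mp prod0 with h | h
    · exact Or.inl (by linarith)
    · exact Or.inr (by linarith)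
  · rintro (h | h)
    · refine ⟨(c + 1) / 2, ?_, ?_⟩
      · have hx : M + c * ((c+1)/2) - ((c+1)/2) ^ 2 = (c+1)/2 := by linear_combination (1/4) * h
        rw [Hmap, Prod.mk.injEq]
        simp only
        rw [hx]
        refine ⟨rfl, ?_⟩
        rw [div_eq_iff hc]
        linear_combination (-1/4) * h
      · have hx : M + c * ((c+1)/2) - ((c+1)/2) ^ 2 = (c+1)/2 := by linear_combination (1/4) * h
        rw [HJac, eig_iff]
        simp only
        rw [hx]
        field_simp
        ring
    · refine ⟨-((c + 1) / 2), ?_, ?_⟩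
      · have hx : M + c * (-((c+1)/2)) - (-((c+1)/2)) ^ 2 = -((c+1)/2) := by
          linear_combination (1/4) * h
        rw [Hmap, Prod.mk.injEq]
        simp only
        rw [hx]
        refine ⟨rfl, ?_⟩
        rw [div_eq_iff hc]
        linear_combination (-1/4) * h
      · have hx : M + c * (-((c+1)/2)) - (-((c+1)/2)) ^ 2 = -((c+1)/2) := by
          linear_combination (1/4) * h
        rw [HJac, eig_iff]
        simp only
        rw [hx]
        field_simp
        ring
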